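/- Let k, s ≥ 0 with k ≥ 1, let A = (a_{ij}) ∈ M_k(ℝ) and B = (b_{ij}) ∈ M_{k+s}(ℝ) with block decomposition B = (B₁ B₂; B₃ B₄) where B₁ ∈ M_k(ℝ) and B₄ ∈ M_s(ℝ) (with the convention det(B₄) = 1 when s = 0), and suppose |a_{ij}|, |b_{ij}| ≤ N for some N > 1. Then for every real x > 0, | det( (A 0; 0 0)·x + B ) − det(A)·det(B₄)·x^k | ≤ N^{k+s} · Σ_{l=0}^{k−1} [ k!/((k−l)!·l!) · (k!·(k+s−l)!)/(k−l)! ] · x^l, where (A 0; 0 0) ∈ M_{k+s}(ℝ) is the block matrix with A in the top-left k×k block and zeros elsewhere. -/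

import Mathlib

noncomputable section

open Finset

private lemma perm_count {α : Type*} [Fintype α] [DecidableEq α] (t L : Finset α) :
    (Finset.univ.filter fun σ : Equiv.Perm α => ∀ j ∈ t, σ j ∈ L).card
      ≤ L.card.descFactorial t.card * (Fintype.card α - t.card).factorial := by
  classical
  set Q := Finset.univ.filter fun σ : Equiv.Perm α => ∀ j ∈ t, σ j ∈ L with hQdef
  set f : Equiv.Perm α → (t → α) := fun σ j => σ j with hfdef
  have himage : (Q.image f).card ≤ L.card.descFactorial t.card := by
    rw [← Fintype.card_coe (Q.image f)]
    have hmemL : ∀ (b : {b // b ∈ Q.image f}) (j : t), b.1 j ∈ L := by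
      intro b j
      obtain ⟨σ, hσ, hfb⟩ := Finset.mem_image.mp b.2
      rw [← hfb]
      exact (Finset.mem_filter.mp hσ).2 j j.2
    have hinj : ∀ b : {b // b ∈ Q.image f}, Function.Injective b.1 := by
      intro b j j' h
      obtain ⟨σ, hσ, hfb⟩ := Finset.mem_image.mp b.2
      rw [← hfb] at h
      exact Subtype.ext (σ.injective h)
    have h1 : Fintype.card {b // b ∈ Q.image f} ≤ Fintype.card (↥t ↪ ↥L) := by
      refine Fintype.card_le_of_injective
        (fun b => ⟨fun j => ⟨b.1 j, hmemL b j⟩, fun j j' h => hinj b (Subtype.ext_iff.mp h)⟩) ?_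
      intro b b' heq
      refine Subtype.ext (funext fun j => ?_)
      exact Subtype.ext_iff.mp (DFunLike.congr_fun heq j)
    have h2 : Fintype.card (↥t ↪ ↥L) = L.card.descFactorial t.card := by
      rw [Fintype.card_embedding_eq, Fintype.card_coe, Fintype.card_coe]
    exact h2 ▸ h1
  have hfiber : ∀ a ∈ Q.image f,
      (Q.filter fun σ => f σ = a).card ≤ (Fintype.card α - t.card).factorial := by
    intro a ha
    obtain ⟨σ₀, hσ₀, hfσ₀⟩ := Finset.mem_image.mp ha
    rw [← Fintype.card_coe]
    have hmemR : ∀ (p : {σ // σ ∈ Q.filter fun σ => f σ = a}) (j : ↥(tᶜ)),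
        p.1 j.1 ∈ (t.image σ₀)ᶜ := by
      intro p j
      have hpa : f p.1 = a := (Finset.mem_filter.mp p.2).2
      rw [Finset.mem_compl, Finset.mem_image]
      rintro ⟨i, hi, hσ₀i⟩
      have heqi : σ₀ i = p.1 i := congrFun (hfσ₀.trans hpa.symm) ⟨i, hi⟩
      have hji : i = (j : α) := p.1.injective (by rw [← heqi, hσ₀i])
      exact (Finset.mem_compl.mp j.2) (hji ▸ hi)
    have hle : Fintype.card {σ // σ ∈ Q.filter fun σ => f σ = a}
        ≤ Fintype.card (↥(tᶜ) ↪ ↥((t.image σ₀)ᶜ)) := by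
      refine Fintype.card_le_of_injective
        (fun p => ⟨fun j => ⟨p.1 j.1, hmemR p j⟩,
          fun j j' h => Subtype.ext (p.1.injective (Subtype.ext_iff.mp h))⟩) ?_
      intro p p' heq
      refine Subtype.ext (Equiv.ext fun i => ?_)
      by_cases hi : i ∈ t
      · have hpa : f p.1 = a := (Finset.mem_filter.mp p.2).2
        have hpa' : f p'.1 = a := (Finset.mem_filter.mp p'.2).2
        exact (congrFun hpa ⟨i, hi⟩).trans (congrFun hpa' ⟨i, hi⟩).symm
      · exact Subtype.ext_iff.mp (DFunLike.congr_fun heq ⟨i, Finset.mem_compl.mpr hi⟩)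
    refine hle.trans (le_of_eq ?_)
    rw [Fintype.card_embedding_eq, Fintype.card_coe, Fintype.card_coe,
      Finset.card_compl, Finset.card_compl,
      Finset.card_image_of_injective _ σ₀.injective, Nat.descFactorial_self]
  calc Q.card ≤ (Fintype.card α - t.card).factorial * (Q.image f).card :=
        Finset.card_le_mul_card_image Q _ hfiber
    _ ≤ (Fintype.card α - t.card).factorial * (L.card.descFactorial t.card) :=
        Nat.mul_le_mul_left _ himage
    _ = _ := Nat.mul_comm _ _

/-- **Lemma (Statement 3).** Let `A ∈ M_k(ℝ)`, `B ∈ M_{k+s}(ℝ)` with entries bounded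
by `N > 1`, and let `B₄` be the lower-right `s × s` block of `B` (with `det B₄ = 1`
when `s = 0`). Then for every `x > 0`,
`|det((A 0; 0 0)·x + B) - det A · det B₄ · x^k| ≤
  N^{k+s} · Σ_{l<k} [k!/((k-l)!·l!)] · [k!·(k+s-l)!/(k-l)!] · x^l`. -/
theorem abs_det_block_sub_leading_le
    (k s : ℕ) (hk : 1 ≤ k) (N : ℝ) (hN : 1 < N)
    (A : Matrix (Fin k) (Fin k) ℝ) (B : Matrix (Fin (k + s)) (Fin (k + s)) ℝ)
    (hA : ∀ i j, |A i j| ≤ N) (hB : ∀ i j, |B i j| ≤ N)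
    (x : ℝ) (hx : 0 < x) :
    |(x • (Matrix.reindex finSumFinEquiv finSumFinEquiv
          (Matrix.fromBlocks A 0 0 0)) + B).det
        - A.det * (B.submatrix (Fin.natAdd k) (Fin.natAdd k)).det * x ^ k|
      ≤ N ^ (k + s) *
        ∑ l ∈ Finset.range k,
          ((k.factorial : ℝ) / ((k - l).factorial * l.factorial)) *
            ((k.factorial * (k + s - l).factorial : ℝ) / (k - l).factorial) * x ^ l := by
  classical
  have hN0 : (0:ℝ) ≤ N := le_trans zero_le_one hN.le
  set C : Matrix (Fin (k+s)) (Fin (k+s)) ℝ :=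
    Matrix.reindex finSumFinEquiv finSumFinEquiv (Matrix.fromBlocks A 0 0 0) with hC
  set L : Finset (Fin (k + s)) := Finset.image (fun i : Fin k => Fin.castAdd s i) Finset.univ
    with hL
  have hLcard : L.card = k := by
    rw [hL, Finset.card_image_of_injective _ (Fin.castAdd_injective k s), Finset.card_univ,
      Fintype.card_fin]
  have hmemL : ∀ j, j ∈ L ↔ ∃ a : Fin k, finSumFinEquiv.symm j = Sum.inl a := by
    intro j
    simp only [hL, Finset.mem_image, Finset.mem_univ, true_and]
    constructor
    · rintro ⟨a, rfl⟩; exact ⟨a, finSumFinEquiv_symm_apply_castAdd a⟩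
    · rintro ⟨a, haeq⟩
      exact ⟨a, by rw [← finSumFinEquiv_apply_left, ← haeq, Equiv.apply_symm_apply]⟩
  have hCrow : ∀ i j, i ∉ L → C i j = 0 := by
    intro i j hi
    rw [hC]
    simp only [Matrix.reindex_apply, Matrix.submatrix_apply]
    rcases h : finSumFinEquiv.symm i with a | a
    · exact absurd ((hmemL i).mpr ⟨a, h⟩) hi
    · rcases finSumFinEquiv.symm j with b | b <;> simp
  have hCcol : ∀ i j, j ∉ L → C i j = 0 := by
    intro i j hj
    rw [hC]
    simp only [Matrix.reindex_apply, Matrix.submatrix_apply]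
    rcases h : finSumFinEquiv.symm j with b | b
    · exact absurd ((hmemL j).mpr ⟨b, h⟩) hj
    · rcases finSumFinEquiv.symm i with a | a <;> simp
  have hCabs : ∀ i j, |C i j| ≤ N := by
    intro i j
    rw [hC]
    simp only [Matrix.reindex_apply, Matrix.submatrix_apply]
    rcases finSumFinEquiv.symm i with a | a <;> rcases finSumFinEquiv.symm j with b | b <;>
      simp [hA, hN0]
  set D : Finset (Fin (k+s)) → Matrix (Fin (k+s)) (Fin (k+s)) ℝ :=
    fun t => Matrix.of fun i j => if j ∈ t then x * C i j else B i j with hD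
  -- main term
  have hDL : (D L).det = A.det * (B.submatrix (Fin.natAdd k) (Fin.natAdd k)).det * x ^ k := by
    have hEq : D L = Matrix.reindex finSumFinEquiv finSumFinEquiv
        (Matrix.fromBlocks (x • A) (B.submatrix (Fin.castAdd s) (Fin.natAdd k)) 0
          (B.submatrix (Fin.natAdd k) (Fin.natAdd k))) := by
      ext i j
      simp only [hD, Matrix.of_apply, Matrix.reindex_apply, Matrix.submatrix_apply]
      have hieq : i = finSumFinEquiv (finSumFinEquiv.symm i) := (Equiv.apply_symm_apply _ _).symm
      have hjeq : j = finSumFinEquiv (finSumFinEquiv.symm j) := (Equiv.apply_symm_apply _ _).symm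
      by_cases hj : j ∈ L
      · rw [if_pos hj]
        obtain ⟨b, hb⟩ := (hmemL j).mp hj
        rw [hC]
        simp only [Matrix.reindex_apply, Matrix.submatrix_apply, hb]
        rcases hi : finSumFinEquiv.symm i with a | a
        · simp [Matrix.smul_apply, smul_eq_mul]
        · simp
      · rw [if_neg hj]
        rcases hj' : finSumFinEquiv.symm j with b | b
        · exact absurd ((hmemL j).mpr ⟨b, hj'⟩) hj
        · have hjv : j = Fin.natAdd k b := by
            rw [hjeq, hj', finSumFinEquiv_apply_right]
          rcases hi : finSumFinEquiv.symm i with a | a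
          · have hiv : i = Fin.castAdd s a := by
              rw [hieq, hi, finSumFinEquiv_apply_left]
            simp only [Matrix.fromBlocks_apply₁₂, Matrix.submatrix_apply]
            rw [hiv, hjv]
          · have hiv : i = Fin.natAdd k a := by
              rw [hieq, hi, finSumFinEquiv_apply_right]
            simp only [Matrix.fromBlocks_apply₂₂, Matrix.submatrix_apply]
            rw [hiv, hjv]
    rw [hEq, Matrix.det_reindex_self, Matrix.det_fromBlocks_zero₂₁, Matrix.det_smul,
      Fintype.card_fin]
    ring
  -- expansion
  have hexp : (x • C + B).det = ∑ t ∈ (Finset.univ : Finset (Fin (k+s))).powerset, (D t).det := by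
    have hprod : ∀ σ : Equiv.Perm (Fin (k+s)),
        (∏ i, (x • C + B) (σ i) i) = ∑ t ∈ (Finset.univ : Finset (Fin (k+s))).powerset,
          ∏ i, (D t) (σ i) i := by
      intro σ
      have h1 : ∀ i, (x • C + B) (σ i) i = x * C (σ i) i + B (σ i) i := fun i => by
        simp [Matrix.add_apply, Matrix.smul_apply, smul_eq_mul]
      calc (∏ i, (x • C + B) (σ i) i) = ∏ i, (x * C (σ i) i + B (σ i) i) := by
            exact Finset.prod_congr rfl fun i _ => h1 i
        _ = ∑ t ∈ (Finset.univ : Finset (Fin (k+s))).powerset,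
              (∏ i ∈ t, x * C (σ i) i) * ∏ i ∈ Finset.univ \ t, B (σ i) i :=
            Finset.prod_add _ _ _
        _ = _ := by
            refine Finset.sum_congr rfl fun t ht => ?_
            have h2 : Finset.univ.filter (· ∈ t) = t := by ext i; simp
            have h3 : Finset.univ.filter (fun i => ¬ i ∈ t) = Finset.univ \ t := by
              ext i; simp
            rw [← Finset.prod_filter_mul_prod_filter_not Finset.univ (· ∈ t)
              (fun i => (D t) (σ i) i), h2, h3]
            congr 1
            · exact Finset.prod_congr rfl fun i hi => by simp [hD, hi]
            · exact Finset.prod_congr rfl fun i hi => by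
                simp [hD, (Finset.mem_sdiff.mp hi).2]
    rw [Matrix.det_apply']
    simp_rw [hprod, Finset.mul_sum]
    rw [Finset.sum_comm]
    exact Finset.sum_congr rfl fun t _ => (Matrix.det_apply' _).symm
  -- restrict to subsets of L
  have hsub : ∑ t ∈ (Finset.univ : Finset (Fin (k+s))).powerset, (D t).det
      = ∑ t ∈ L.powerset, (D t).det := by
    symm
    apply Finset.sum_subset (Finset.powerset_mono.mpr (Finset.subset_univ L))
    intro t _ ht
    obtain ⟨j, hjt, hjL⟩ := Finset.not_subset.mp (fun hsub' => ht (Finset.mem_powerset.mpr hsub'))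
    apply Matrix.det_eq_zero_of_column_eq_zero j
    intro i
    simp only [hD, Matrix.of_apply, if_pos hjt]
    rw [hCcol i j hjL, mul_zero]
  -- decompose
  have hdec : ∑ t ∈ L.powerset, (D t).det
      = (∑ l ∈ Finset.range k, ∑ t ∈ Finset.powersetCard l L, (D t).det) + (D L).det := by
    have hlast : ∑ t ∈ Finset.powersetCard L.card L, (D t).det = (D L).det := by
      rw [Finset.powersetCard_self, Finset.sum_singleton]
    rw [Finset.powerset_card_disjiUnion]
    erw [Finset.sum_disjiUnion]
    rw [Finset.sum_range_succ, hlast,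
      hLcard]
  have hmain : (x • C + B).det
        - A.det * (B.submatrix (Fin.natAdd k) (Fin.natAdd k)).det * x ^ k
      = ∑ l ∈ Finset.range k, ∑ t ∈ Finset.powersetCard l L, (D t).det := by
    rw [hexp, hsub, hdec, hDL]; ring
  rw [hmain]
  -- per-term bound
  have hbound : ∀ l, l < k → ∀ t ∈ Finset.powersetCard l L,
      |(D t).det| ≤ ((k.descFactorial l * (k + s - l).factorial : ℕ) : ℝ)
        * (N ^ (k+s) * x ^ l) := by
    intro l hl t ht
    obtain ⟨htL, htc⟩ := Finset.mem_powersetCard.mp ht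
    have hlks : l ≤ k + s := le_trans hl.le (Nat.le_add_right k s)
    rw [Matrix.det_apply']
    refine le_trans (Finset.abs_sum_le_sum_abs _ _) ?_
    set Q := Finset.univ.filter fun σ : Equiv.Perm (Fin (k+s)) => ∀ j ∈ t, σ j ∈ L with hQdef
    have hterm : ∀ σ : Equiv.Perm (Fin (k+s)),
        |((Equiv.Perm.sign σ : ℤ) : ℝ) * ∏ i, (D t) (σ i) i| ≤
          if σ ∈ Q then N ^ (k+s) * x ^ l else 0 := by
      intro σ
      rw [abs_mul]
      have hsign : |((Equiv.Perm.sign σ : ℤ) : ℝ)| = 1 := by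
        rcases Int.units_eq_one_or (Equiv.Perm.sign σ) with h | h <;> simp [h]
      rw [hsign, one_mul, Finset.abs_prod]
      by_cases hσ : σ ∈ Q
      · rw [if_pos hσ]
        have hQσ : ∀ j ∈ t, σ j ∈ L := (Finset.mem_filter.mp hσ).2
        calc ∏ i, |(D t) (σ i) i|
            = (∏ i ∈ t, |(D t) (σ i) i|) * ∏ i ∈ tᶜ, |(D t) (σ i) i| :=
              (Finset.prod_mul_prod_compl t _).symm
          _ ≤ (∏ _i ∈ t, (N * x)) * ∏ _i ∈ tᶜ, N := by
              refine mul_le_mul (Finset.prod_le_prod (fun i _ => abs_nonneg _) fun i hi => ?_)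
                (Finset.prod_le_prod (fun i _ => abs_nonneg _) fun i hi => ?_)
                (Finset.prod_nonneg fun i _ => abs_nonneg _)
                (Finset.prod_nonneg fun i _ => mul_nonneg hN0 hx.le)
              · simp only [hD, Matrix.of_apply, if_pos hi]
                rw [abs_mul, abs_of_pos hx, mul_comm]
                exact mul_le_mul_of_nonneg_right (hCabs _ _) hx.le
              · simp only [hD, Matrix.of_apply, if_neg (Finset.mem_compl.mp hi)]
                exact hB _ _
          _ = (N * x) ^ l * N ^ (k + s - l) := by
              rw [Finset.prod_const, Finset.prod_const, htc, Finset.card_compl,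
                Fintype.card_fin, htc]
          _ = N ^ (k+s) * x ^ l := by
              calc (N * x) ^ l * N ^ (k + s - l)
                  = (N ^ l * N ^ (k + s - l)) * x ^ l := by ring
                _ = N ^ (k+s) * x ^ l := by rw [← pow_add, Nat.add_sub_cancel' hlks]
      · rw [if_neg hσ]
        have hex : ∃ j ∈ t, σ j ∉ L := by
          simpa [hQdef, Finset.mem_filter] using hσ
        obtain ⟨j, hjt, hjL⟩ := hex
        refine le_of_eq (Finset.prod_eq_zero (Finset.mem_univ j) ?_)
        simp only [hD, Matrix.of_apply, if_pos hjt]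
        rw [hCrow _ _ hjL, mul_zero, abs_zero]
    refine le_trans (Finset.sum_le_sum fun σ _ => hterm σ) ?_
    rw [← Finset.sum_filter]
    have hQQ : (Finset.univ.filter fun a => a ∈ Q) = Q := by ext σ; simp
    rw [hQQ, Finset.sum_const, nsmul_eq_mul]
    refine mul_le_mul_of_nonneg_right ?_ (mul_nonneg (pow_nonneg hN0 _) (pow_nonneg hx.le _))
    have := perm_count t L
    rw [hLcard, htc, Fintype.card_fin] at this
    rw [hQdef]
    exact Nat.cast_le.mpr (le_trans (le_of_eq (by congr!)) this)
  refine le_trans (Finset.abs_sum_le_sum_abs _ _) ?_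
  refine le_trans (Finset.sum_le_sum fun l hl =>
    le_trans (Finset.abs_sum_le_sum_abs _ _)
      (Finset.sum_le_sum fun t ht => hbound l (Finset.mem_range.mp hl) t ht)) ?_
  rw [Finset.mul_sum]
  refine le_of_eq (Finset.sum_congr rfl fun l hl => ?_)
  have hlk : l ≤ k := (Finset.mem_range.mp hl).le
  rw [Finset.sum_const, Finset.card_powersetCard, hLcard, nsmul_eq_mul]
  have hfac : ((k - l).factorial : ℝ) ≠ 0 := Nat.cast_ne_zero.mpr (Nat.factorial_ne_zero _)
  have hnat : k.descFactorial l * (k - l).factorial = k.factorial := by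
    rw [Nat.descFactorial_eq_factorial_mul_choose, mul_comm (l.factorial)]
    exact Nat.choose_mul_factorial_mul_factorial hlk
  have h1 : (k.descFactorial l : ℝ) * ((k - l).factorial : ℝ) = (k.factorial : ℝ) := by
    exact_mod_cast congrArg (Nat.cast : ℕ → ℝ) hnat
  have h2 : (k.factorial : ℝ) / ((k - l).factorial * l.factorial) = (k.choose l : ℝ) := by
    rw [Nat.cast_choose ℝ hlk, mul_comm]
  have h3 : ((k.factorial : ℝ) * ((k + s - l).factorial : ℝ)) / ((k - l).factorial : ℝ)
      = (k.descFactorial l : ℝ) * ((k + s - l).factorial : ℝ) := by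
    rw [div_eq_iff hfac]
    linear_combination (-((k + s - l).factorial : ℝ)) * h1
  rw [h2] at *
  push_cast
  rw [h2, h3]
  ring
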